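/- The maximum possible degree of any vertex in a graph of adjacency dimension k is k + 2^k − 1. -/

import Mathlib

open SimpleGraph Finset

variable {V : Type*}

/-- truncated distance `d_k(x,y) = min(d(x,y), k+1)` with `d = ∞` across components. -/
noncomputable def truncDist (G : SimpleGraph V) (k : ℕ) (x y : V) : ℕ∞ :=
  min (G.edist x y) (k + 1)

/-- `f` is a resolving broadcast of `G`. -/
def IsResolvingBroadcast (G : SimpleGraph V) (f : V → ℕ) : Prop :=
  ∀ x y : V, x ≠ y → ∃ z : V, 0 < f z ∧ truncDist G (f z) x z ≠ truncDist G (f z) y z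

/-- broadcast dimension -/
noncomputable def bdim (G : SimpleGraph V) [Fintype V] : ℕ :=
  sInf {c : ℕ | ∃ f : V → ℕ, IsResolvingBroadcast G f ∧ ∑ v, f v = c}

/-- adjacency resolving set -/
def IsAdjResolvingSet (G : SimpleGraph V) (S : Set V) : Prop :=
  ∀ x y : V, x ≠ y → ∃ z ∈ S, truncDist G 1 x z ≠ truncDist G 1 y z

/-- adjacency dimension -/
noncomputable def adim (G : SimpleGraph V) [Fintype V] : ℕ :=
  sInf {n : ℕ | ∃ S : Finset V, IsAdjResolvingSet G ↑S ∧ S.card = n}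

/-- resolving set (metric dimension) -/
def IsResolvingSet (G : SimpleGraph V) (S : Set V) : Prop :=
  ∀ x y : V, x ≠ y → ∃ z ∈ S, G.edist x z ≠ G.edist y z

/-- metric dimension -/
noncomputable def mdim (G : SimpleGraph V) [Fintype V] : ℕ :=
  sInf {n : ℕ | ∃ S : Finset V, IsResolvingSet G ↑S ∧ S.card = n}

/-! ### Auxiliary lemmas -/

lemma truncDist_one_eq (G : SimpleGraph V) (x z : V) [Decidable (x = z)]
    [Decidable (G.Adj x z)] :
    truncDist G 1 x z = if x = z then 0 else if G.Adj x z then 1 else 2 := by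
  unfold truncDist
  have hc : ((1:ℕ):ℕ∞) + 1 = 2 := by norm_num
  rw [hc]
  split_ifs with h1 h2
  · subst h1; simp [edist_self]
  · rw [← edist_eq_one_iff_adj] at h2
    rw [h2]; norm_num
  · have h0 : G.edist x z ≠ 0 := edist_eq_zero_iff.ne.mpr h1
    have h1' : G.edist x z ≠ 1 := fun h => h2 (edist_eq_one_iff_adj.mp h)
    have h2le : (2 : ℕ∞) ≤ G.edist x z := by
      have h1lt : 1 < G.edist x z :=
        lt_of_le_of_ne (ENat.one_le_iff_ne_zero.mpr h0) (Ne.symm h1')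
      rw [← one_add_one_eq_two]
      exact Order.add_one_le_of_lt h1lt
    exact min_eq_right h2le

/-- the adjacency profile map on vertices outside `S` is injective. -/
lemma adjProfile_ne (G : SimpleGraph V) (S : Finset V)
    (hS : IsAdjResolvingSet G ↑S) {u w : V} (hu : u ∉ S) (hw : w ∉ S) (huw : u ≠ w) :
    (fun z : {z // z ∈ S} => G.Adj u z.1) ≠ (fun z : {z // z ∈ S} => G.Adj w z.1) := by
  classical
  obtain ⟨z, hz, hne⟩ := hS u w huw
  rw [Finset.mem_coe] at hz
  intro h
  apply hne
  have hadj : G.Adj u z ↔ G.Adj w z := iff_of_eq (congrFun h ⟨z, hz⟩)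
  have huz : u ≠ z := fun e => hu (e ▸ hz)
  have hwz : w ≠ z := fun e => hw (e ▸ hz)
  rw [truncDist_one_eq, truncDist_one_eq]
  simp only [huz, hwz, if_neg, if_false]
  by_cases ha : G.Adj u z
  · simp [ha, hadj.mp ha]
  · have hb : ¬ G.Adj w z := fun h' => ha (hadj.mpr h')
    simp [ha, hb]

lemma degree_le_of_resolving {V : Type*} [Fintype V] [DecidableEq V] (G : SimpleGraph V)
    [DecidableRel G.Adj] (S : Finset V) (hS : IsAdjResolvingSet G ↑S) (v : V) :
    G.degree v ≤ S.card + 2 ^ S.card - 1 := by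
  classical
  set N := G.neighborFinset v with hN
  set F : V → ({z // z ∈ S} → Prop) := fun u z => G.Adj u z.1 with hF
  have hvN : v ∉ N := by simp [hN]
  obtain ⟨g0, hg0⟩ : ∃ g0 : {z // z ∈ S} → Prop, ∀ u ∈ N \ S, F u ≠ g0 := by
    by_cases hv : v ∈ S
    · refine ⟨fun _ => False, fun u hu h => ?_⟩
      have hadj : G.Adj u v := ((G.mem_neighborFinset v u).mp (mem_sdiff.mp hu).1).symm
      have := congrFun h ⟨v, hv⟩
      simp only [hF] at this
      rw [← this]
      exact hadj
    · refine ⟨F v, fun u hu h => ?_⟩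
      have hu' := mem_sdiff.mp hu
      have huv : u ≠ v := fun e => hvN (e ▸ hu'.1)
      exact adjProfile_ne G S hS hu'.2 hv huv h
  have hinj : Set.InjOn F ↑(N \ S) := by
    intro u hu w hw h
    by_contra hne
    rw [Finset.mem_coe, mem_sdiff] at hu hw
    exact adjProfile_ne G S hS hu.2 hw.2 hne h
  have hcard1 : (N \ S).card ≤ 2 ^ S.card - 1 := by
    have himg : (N \ S).image F ⊆ (Finset.univ : Finset ({z // z ∈ S} → Prop)).erase g0 := by
      intro g hg
      obtain ⟨u, hu, rfl⟩ := Finset.mem_image.mp hg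
      exact Finset.mem_erase.mpr ⟨hg0 u hu, Finset.mem_univ _⟩
    have := Finset.card_le_card himg
    rw [Finset.card_image_of_injOn hinj] at this
    have hcu : (Finset.univ : Finset ({z // z ∈ S} → Prop)).card = 2 ^ S.card := by
      rw [Finset.card_univ, Fintype.card_fun, Fintype.card_prop, Fintype.card_coe]
    rw [Finset.card_erase_of_mem (Finset.mem_univ _), hcu] at this
    exact this
  have hcard2 : (N ∩ S).card ≤ S.card := Finset.card_le_card inter_subset_right
  have hsplit : (N ∩ S).card + (N \ S).card = N.card := Finset.card_inter_add_card_sdiff N S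
  have h1 : 1 ≤ 2 ^ S.card := Nat.one_le_two_pow
  have hdeg : G.degree v = N.card := rfl
  omega

lemma card_le_of_resolving {V : Type*} [Fintype V] (G : SimpleGraph V) (S : Finset V)
    (hS : IsAdjResolvingSet G ↑S) : Fintype.card V ≤ S.card + 2 ^ S.card := by
  classical
  have hle : Fintype.card V ≤ Fintype.card ({z // z ∈ S} ⊕ ({z // z ∈ S} → Prop)) := by
    apply Fintype.card_le_of_injective
      (fun u => if h : u ∈ S then Sum.inl ⟨u, h⟩ else Sum.inr (fun z => G.Adj u z.1))
    intro u w h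
    by_cases hu : u ∈ S <;> by_cases hw : w ∈ S <;> simp only [hu, hw, dif_pos, dif_neg,
      not_false_iff, Sum.inl.injEq, Sum.inr.injEq, Subtype.mk.injEq] at h
    · exact h
    · exact absurd h (by simp)
    · exact absurd h (by simp)
    · by_contra hne
      exact adjProfile_ne G S hS hu hw hne h
  simpa [Fintype.card_sum, Fintype.card_fun, Fintype.card_prop, Fintype.card_coe] using hle

lemma univ_isAdjResolving {V : Type*} [Fintype V] (G : SimpleGraph V) :
    IsAdjResolvingSet G ↑(Finset.univ : Finset V) := by
  classical
  intro x y hxy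
  refine ⟨x, by simp, ?_⟩
  rw [truncDist_one_eq, truncDist_one_eq]
  simp only [if_pos rfl, if_neg (Ne.symm hxy)]
  split_ifs <;> simp

lemma exists_adim_set {V : Type*} [Fintype V] (G : SimpleGraph V) :
    ∃ S : Finset V, IsAdjResolvingSet G ↑S ∧ S.card = adim G := by
  have hne : {n : ℕ | ∃ S : Finset V, IsAdjResolvingSet G ↑S ∧ S.card = n}.Nonempty :=
    ⟨_, Finset.univ, univ_isAdjResolving G, rfl⟩
  exact Nat.sInf_mem hne

/-! ### The extremal construction -/

/-- vertex type of the extremal graph -/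
abbrev ExV (k : ℕ) := Option (Fin k ⊕ {a : Fin k → Bool // a ≠ fun _ => true})

def exAdj (k : ℕ) : ExV k → ExV k → Prop
  | none, none => False
  | none, some _ => True
  | some _, none => True
  | some (Sum.inl _), some (Sum.inl _) => False
  | some (Sum.inl i), some (Sum.inr a) => a.1 i = true
  | some (Sum.inr a), some (Sum.inl i) => a.1 i = true
  | some (Sum.inr _), some (Sum.inr _) => False

def exG (k : ℕ) : SimpleGraph (ExV k) where
  Adj := exAdj k
  symm := by
    refine ⟨?_⟩; rintro (_ | (i | a)) (_ | (j | b)) h <;> first | exact h | trivial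
  loopless := by
    refine ⟨?_⟩; rintro (_ | (i | a)) h <;> exact h

lemma exG_adj_none (k : ℕ) (x : ExV k) : (exG k).Adj none x ↔ x ≠ none := by
  rcases x with _ | (i | a) <;> simp [exG, exAdj]

lemma card_ExV (k : ℕ) : Fintype.card (ExV k) = k + 2 ^ k := by
  classical
  have h1 : Fintype.card {a : Fin k → Bool // a ≠ fun _ => true} = 2 ^ k - 1 := by
    have := Fintype.card_subtype_compl (fun a : Fin k → Bool => a = fun _ => true)
    rw [Fintype.card_subtype_eq] at this
    simpa [Fintype.card_fun] using this
  have h2 : 1 ≤ 2 ^ k := Nat.one_le_two_pow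
  simp only [Fintype.card_option, Fintype.card_sum, Fintype.card_fin, h1]
  omega

lemma exG_degree_none (k : ℕ) [DecidableRel (exG k).Adj] :
    (exG k).degree none = k + 2 ^ k - 1 := by
  classical
  have : (exG k).neighborFinset none = Finset.univ.erase none := by
    ext x
    simp [mem_neighborFinset, exG_adj_none, Finset.mem_erase]
  rw [← card_neighborFinset_eq_degree, this, Finset.card_erase_of_mem (Finset.mem_univ _),
    Finset.card_univ, card_ExV]

lemma exG_td_none (k : ℕ) (i : Fin k) :
    truncDist (exG k) 1 none (some (Sum.inl i)) = 1 := by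
  classical
  rw [truncDist_one_eq]
  simp [exG, exAdj]

lemma exG_td_inl (k : ℕ) (j i : Fin k) :
    truncDist (exG k) 1 (some (Sum.inl j)) (some (Sum.inl i)) = if j = i then 0 else 2 := by
  classical
  rw [truncDist_one_eq]
  by_cases h : j = i <;> simp [exG, exAdj, h]

lemma exG_td_inr (k : ℕ) (a : {a : Fin k → Bool // a ≠ fun _ => true}) (i : Fin k) :
    truncDist (exG k) 1 (some (Sum.inr a)) (some (Sum.inl i)) = if a.1 i then 1 else 2 := by
  classical
  rw [truncDist_one_eq]
  by_cases h : a.1 i <;> simp [exG, exAdj, h]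

lemma exists_false_coord {k : ℕ} (a : {a : Fin k → Bool // a ≠ fun _ => true}) :
    ∃ i, a.1 i = false := by
  by_contra h
  push_neg at h
  exact a.2 (funext fun i => by simpa using h i)

theorem stmt_7 (k : ℕ) (hk : 1 ≤ k) :
    (∀ (V : Type) (_ : Fintype V) (_ : DecidableEq V) (G : SimpleGraph V)
      (_ : ∀ v w : V, Decidable (G.Adj v w)),
      adim G = k → ∀ v : V, G.degree v ≤ k + 2 ^ k - 1) ∧
    ∃ (V : Type) (_ : Fintype V) (_ : DecidableEq V) (G : SimpleGraph V)
      (_ : ∀ v w : V, Decidable (G.Adj v w)) (v : V),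
      adim G = k ∧ G.degree v = k + 2 ^ k - 1 := by
  constructor
  · intro V _ _ G _ hadim v
    obtain ⟨S, hSres, hScard⟩ := exists_adim_set G
    rw [hadim] at hScard
    have := degree_le_of_resolving G S hSres v
    rwa [hScard] at this
  · classical
    -- the extremal graph
    refine ⟨ExV k, inferInstance, inferInstance, exG k, fun v w => Classical.dec _,
      none, ?_, exG_degree_none k⟩
    -- adim (exG k) = k
    have hub : adim (exG k) ≤ k := by
      apply Nat.sInf_le
      refine ⟨Finset.univ.image (fun i : Fin k => (some (Sum.inl i) : ExV k)), ?_, ?_⟩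
      · -- resolving
        intro x y hxy
        have hmem : ∀ i : Fin k, (some (Sum.inl i) : ExV k) ∈
            (↑(Finset.univ.image (fun i : Fin k => (some (Sum.inl i) : ExV k))) :
              Set (ExV k)) := fun i => by simp
        rcases x with _ | (i | a) <;> rcases y with _ | (j | b)
        · exact absurd rfl hxy
        · exact ⟨_, hmem j, by rw [exG_td_none, exG_td_inl]; simp⟩
        · obtain ⟨i, hi⟩ := exists_false_coord b
          exact ⟨_, hmem i, by rw [exG_td_none, exG_td_inr, hi]; simp⟩
        · exact ⟨_, hmem i, by rw [exG_td_none, exG_td_inl]; simp⟩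
        · have hij : i ≠ j := by simpa using hxy
          refine ⟨_, hmem i, ?_⟩
          rw [exG_td_inl, exG_td_inl, if_pos rfl, if_neg (Ne.symm hij)]
          simp
        · refine ⟨_, hmem i, ?_⟩
          rw [exG_td_inl, exG_td_inr, if_pos rfl]
          split_ifs <;> simp
        · obtain ⟨i, hi⟩ := exists_false_coord a
          exact ⟨_, hmem i, by rw [exG_td_none, exG_td_inr, hi]; simp⟩
        · refine ⟨_, hmem j, ?_⟩
          rw [exG_td_inl, exG_td_inr, if_pos rfl]
          split_ifs <;> simp
        · have hab : a.1 ≠ b.1 := fun h => hxy (by simp [Subtype.ext h])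
          obtain ⟨i, hi⟩ := Function.ne_iff.mp hab
          refine ⟨_, hmem i, ?_⟩
          rw [exG_td_inr, exG_td_inr]
          cases ha : a.1 i <;> cases hb : b.1 i <;> simp_all
      · rw [Finset.card_image_of_injective _ (fun i j h => by simpa using h),
          Finset.card_univ, Fintype.card_fin]
    have hlb : k ≤ adim (exG k) := by
      obtain ⟨S, hSres, hScard⟩ := exists_adim_set (exG k)
      have hcard := card_le_of_resolving (exG k) S hSres
      rw [card_ExV, hScard] at hcard
      by_contra hlt
      push_neg at hlt
      have := Nat.pow_lt_pow_right (one_lt_two) hlt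
      omega
    omega
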